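/- arXiv:1902.06576 — 2 statements merged into one kernel-verified Lean document; each statement's English description precedes it below -/
import Mathlib

section
/- Let V=(Q,D,Δ,w) be a 1-VASS with disequality tests and let s,t ∈ Q be states such that t is reachable from s in the underlying directed graph (Q,Δ). Let V' be the 1-VASS with disequality tests obtained from V by deleting all states from which t is not reachable in the underlying graph (together with their incident transitions), and adding a fresh state t' with D_{t'} = ℕ, a transition from t to t' of weight 0, and a self-loop on t' of weight +1. Then (s,0) covers t in V if and only if (s,0) is unbounded in V'. -/
namespace VASSPaper

/-- A 1-VASS with disequality tests: states `Q`, transition relation `delta`,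
integer weights `w`, and for each state a cofinite set `D q ⊆ ℕ` of allowed counter values. -/
structure OneVASS (Q : Type) where
  delta : Q → Q → Prop
  w : Q → Q → ℤ
  D : Q → Set ℕ
  cofinite : ∀ q, (D q)ᶜ.Finite

variable {Q : Type}

/-- A path is a nonempty sequence of states joined by transitions. -/
def IsPath (V : OneVASS Q) : List Q → Prop
  | [] => False
  | [_] => True
  | a :: b :: l => V.delta a b ∧ IsPath V (b :: l)

/-- The weight of a path: the sum of the weights of its transitions. -/
def pathWeight (V : OneVASS Q) (π : List Q) : ℤ :=
  (List.zipWith V.w π π.tail).sum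

/-- The counter value at position `i` of the run over `π` starting with counter `z`. -/
def counterAt (V : OneVASS Q) (z : ℕ) (π : List Q) (i : ℕ) : ℤ :=
  (z : ℤ) + pathWeight V (π.take (i + 1))

/-- `π` lifts to a run from counter value `z`: all counter values stay nonnegative. -/
def IsRun (V : OneVASS Q) (π : List Q) (z : ℕ) : Prop :=
  IsPath V π ∧ ∀ i, i < π.length → 0 ≤ counterAt V z π i

/-- A valid run additionally respects all disequality guards. -/
def IsValidRun (V : OneVASS Q) (π : List Q) (z : ℕ) : Prop :=
  IsRun V π z ∧ ∀ i, ∀ h : i < π.length, (counterAt V z π i).toNat ∈ V.D (π.get ⟨i, h⟩)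

/-- `π` goes from configuration `c` to configuration `c'`. -/
def RunFromTo (V : OneVASS Q) (π : List Q) (c c' : Q × ℕ) : Prop :=
  π.head? = some c.1 ∧ π.getLast? = some c'.1 ∧ (c'.2 : ℤ) = (c.2 : ℤ) + pathWeight V π

/-- `c'` is reachable from `c` by a valid run. -/
def Reaches (V : OneVASS Q) (c c' : Q × ℕ) : Prop :=
  ∃ π, IsValidRun V π c.2 ∧ RunFromTo V π c c'

/-- A configuration is unbounded if infinitely many configurations are reachable from it. -/
def Unbounded (V : OneVASS Q) (c : Q × ℕ) : Prop :=
  {c' | Reaches V c c'}.Infinite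

/-- `(s,0)` covers the state `t`. -/
def Covers (V : OneVASS Q) (s t : Q) : Prop :=
  ∃ z, Reaches V (s, 0) (t, z)

/-- Every state has at most one disequality guard. -/
def SingleGuard (V : OneVASS Q) : Prop :=
  ∀ q, V.D q = Set.univ ∨ ∃ g : ℕ, V.D q = {g}ᶜ

/-- The minimum weight of a (possibly empty) prefix of `π`. -/
def pmin (V : OneVASS Q) (π : List Q) : ℤ :=
  ((List.range (π.length + 1)).map fun i => pathWeight V (π.take i)).foldr min 0

/-- The maximum weight of a (possibly empty) suffix of `π`. -/
def smax (V : OneVASS Q) (π : List Q) : ℤ :=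
  ((List.range (π.length + 1)).map fun i => pathWeight V (π.drop i)).foldr max 0

/-- A cycle on `q`: a path with at least one transition starting and ending at `q`. -/
def IsCycleOn (V : OneVASS Q) (π : List Q) (q : Q) : Prop :=
  IsPath V π ∧ 2 ≤ π.length ∧ π.head? = some q ∧ π.getLast? = some q

/-- A simple cycle on `q`. -/
def IsSimpleCycleOn (V : OneVASS Q) (π : List Q) (q : Q) : Prop :=
  IsCycleOn V π q ∧ π.dropLast.Nodup

/-- The set of states lying on a positive-weight simple cycle. -/
def Qplus (V : OneVASS Q) : Set Q :=
  {q | ∃ π, IsSimpleCycleOn V π q ∧ 0 < pathWeight V π}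

/-- `γ` is a valid choice of cycles: for each `q ∈ Q₊`, `γ q` is a simple positive cycle
on `q` whose `pmin` is maximal among all positive-weight simple cycles on `q`. -/
def GammaChoice (V : OneVASS Q) (γ : Q → List Q) : Prop :=
  ∀ q ∈ Qplus V,
    IsSimpleCycleOn V (γ q) q ∧ 0 < pathWeight V (γ q) ∧
      ∀ π, IsSimpleCycleOn V π q → 0 < pathWeight V π → pmin V π ≤ pmin V (γ q)

/-- `Conf₊`: configurations `(q,z)` with `q ∈ Q₊` and `z + pmin (γ q) ≥ 0`. -/
def ConfPlus (V : OneVASS Q) (γ : Q → List Q) : Set (Q × ℕ) :=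
  {c | c.1 ∈ Qplus V ∧ 0 ≤ (c.2 : ℤ) + pmin V (γ c.1)}

/-- `W_q`, the weight of the chosen cycle `γ q`, as a natural number. -/
def Wnat (V : OneVASS Q) (γ : Q → List Q) (q : Q) : ℕ :=
  (pathWeight V (γ q)).toNat

/-- The `q`-residue class of `r` modulo `W_q`. -/
def resClass (V : OneVASS Q) (γ : Q → List Q) (q : Q) (r : ℕ) : Set (Q × ℕ) :=
  {c | c ∈ ConfPlus V γ ∧ c.1 = q ∧ c.2 % Wnat V γ q = r}

/-- `iterCycle π k` is the cycle `π` iterated `k+1` times. -/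
def iterCycle (π : List Q) : ℕ → List Q
  | 0 => π
  | k + 1 => iterCycle π k ++ π.tail

/-- Counter values `z < z'` at state `q` are connected by a valid run iterating `γ q`. -/
def chainLinked (V : OneVASS Q) (γ : Q → List Q) (q : Q) (z z' : ℕ) : Prop :=
  ∃ k, IsValidRun V (iterCycle (γ q) k) z ∧
    (z' : ℤ) = (z : ℤ) + pathWeight V (iterCycle (γ q) k)

/-- Any two configurations of `S` are connected by iterating `γ q`. -/
def ChainCond (V : OneVASS Q) (γ : Q → List Q) (q : Q) (S : Set (Q × ℕ)) : Prop :=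
  ∀ c ∈ S, ∀ c' ∈ S, c.2 < c'.2 → chainLinked V γ q c.2 c'.2

/-- A `q`-chain inside the `q`-residue class of `r`: a maximal subset whose
configurations are pairwise connected by iterating `γ q`. -/
def IsChainIn (V : OneVASS Q) (γ : Q → List Q) (q : Q) (r : ℕ) (C : Set (Q × ℕ)) : Prop :=
  C ⊆ resClass V γ q r ∧ ChainCond V γ q C ∧
    ∀ C', C ⊆ C' → C' ⊆ resClass V γ q r → ChainCond V γ q C' → C' = C

/-- A chain (in some residue class of some state of `Q₊`). -/
def IsChain (V : OneVASS Q) (γ : Q → List Q) (C : Set (Q × ℕ)) : Prop :=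
  ∃ q r, q ∈ Qplus V ∧ r < Wnat V γ q ∧ IsChainIn V γ q r C

/-- A set of configurations is bounded if its counter values are bounded. -/
def chainBounded (C : Set (Q × ℕ)) : Prop :=
  BddAbove (Prod.snd '' C)

/-- A residue class is trivial if it consists of a single unbounded chain. -/
def TrivialClass (V : OneVASS Q) (γ : Q → List Q) (q : Q) (r : ℕ) : Prop :=
  IsChainIn V γ q r (resClass V γ q r) ∧ ¬ chainBounded (resClass V γ q r)

/-- There is a valid run of length `k` (i.e. `k` transitions) from `c` into the set `S`. -/
def RunLenTo (V : OneVASS Q) (c : Q × ℕ) (S : Set (Q × ℕ)) (k : ℕ) : Prop :=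
  ∃ π c', c' ∈ S ∧ IsValidRun V π c.2 ∧ RunFromTo V π c c' ∧ π.length = k + 1

/-- Configurations of `Conf₊ \ Un` whose distance to `Un` is minimal among all
configurations of `Conf₊ \ Un`. -/
def Uprime (V : OneVASS Q) (γ : Q → List Q) (Un : Set (Q × ℕ)) : Set (Q × ℕ) :=
  {c | c ∈ ConfPlus V γ \ Un ∧
    ∃ k, RunLenTo V c Un k ∧
      ∀ c' ∈ ConfPlus V γ \ Un, ∀ j, RunLenTo V c' Un j → k ≤ j}

/-- `S` is downward closed in every chain. -/
def dcClosed (V : OneVASS Q) (γ : Q → List Q) (S : Set (Q × ℕ)) : Prop :=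
  ∀ C, IsChain V γ C → ∀ c ∈ S ∩ C, ∀ c' ∈ C, c'.2 ≤ c.2 → c' ∈ S

/-- The inductive sequence `U_n`: `U_0` is the union of the unbounded chains; `U_{n+1}` is the
smallest superset of `U_n ∪ U'_n` that is downward closed in every chain. -/
def U (V : OneVASS Q) (γ : Q → List Q) : ℕ → Set (Q × ℕ)
  | 0 => ⋃₀ {C | IsChain V γ C ∧ ¬ chainBounded C}
  | n + 1 => ⋂₀ {S | U V γ n ∪ Uprime V γ (U V γ n) ⊆ S ∧ dcClosed V γ S}

/-- `C` is an `n`-active bounded chain in the `q`-residue class of `r`. -/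
def nActiveIn (V : OneVASS Q) (γ : Q → List Q) (q : Q) (r : ℕ) (n : ℕ)
    (C : Set (Q × ℕ)) : Prop :=
  IsChainIn V γ q r C ∧ chainBounded C ∧
    ∃ c ∈ U V γ n ∩ resClass V γ q r, ∃ c' ∈ C, c.2 ≤ c'.2

/-- `δ_n(C)` for a `q`-chain `C`: configurations outside `U_n` whose counter value lies
between two counter values of `C \ U_n`. -/
def deltaC (V : OneVASS Q) (γ : Q → List Q) (n : ℕ) (q : Q) (C : Set (Q × ℕ)) :
    Set (Q × ℕ) :=
  {c | c ∈ ConfPlus V γ ∧ c.1 = q ∧ c ∉ U V γ n ∧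
    ∃ z₁ z₂, (q, z₁) ∈ C \ U V γ n ∧ (q, z₂) ∈ C \ U V γ n ∧ z₁ ≤ c.2 ∧ c.2 ≤ z₂}

/-- `δ_n(R)` for the `q`-residue class `R` of `r`: union of `δ_n(C)` over `n`-active chains. -/
def deltaR (V : OneVASS Q) (γ : Q → List Q) (n : ℕ) (q : Q) (r : ℕ) : Set (Q × ℕ) :=
  {c | ∃ C, nActiveIn V γ q r n C ∧ c ∈ deltaC V γ n q C}

/-- A positive-weight cycle (as a list of states). -/
def IsPosCycle (V : OneVASS Q) (π : List Q) : Prop :=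
  2 ≤ π.length ∧ π.head? = π.getLast? ∧ 0 < pathWeight V π

/-- A path is primitive if no proper infix of it is a positive-weight cycle. -/
def Primitive (V : OneVASS Q) (π : List Q) : Prop :=
  ∀ i l, (π.drop i).take l ≠ π → ¬ IsPosCycle V ((π.drop i).take l)


/-- The 1-VASS with disequality tests obtained from `V` by restricting to states from which
`t` is reachable in the underlying graph, and adding a fresh state `t'` (= `none`) with
`D_{t'} = ℕ`, a weight-0 transition from `t` to `t'`, and a weight-1 self-loop on `t'`. -/
def coverReduction (V : OneVASS Q) (t : Q) :
    OneVASS (Option {q : Q // Relation.ReflTransGen V.delta q t}) where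
  delta a b :=
    match a, b with
    | some p, some r => V.delta p.1 r.1
    | some p, none => p.1 = t
    | none, none => True
    | none, some _ => False
  w a b :=
    match a, b with
    | some p, some r => V.w p.1 r.1
    | some _, none => 0
    | none, none => 1
    | none, some _ => 0
  D a :=
    match a with
    | some p => V.D p.1
    | none => Set.univ
  cofinite := by
    intro a
    match a with
    | none => simp
    | some p => exact V.cofinite p.1

open Relation

/-- One valid step between configurations. -/
def Step (V : OneVASS Q) (c c' : Q × ℕ) : Prop :=
  V.delta c.1 c'.1 ∧ (c'.2 : ℤ) = (c.2 : ℤ) + V.w c.1 c'.1 ∧ c.2 ∈ V.D c.1 ∧ c'.2 ∈ V.D c'.1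

lemma pathWeight_cons (V : OneVASS Q) (a b : Q) (l : List Q) :
    pathWeight V (a :: b :: l) = V.w a b + pathWeight V (b :: l) := by
  simp [pathWeight]

lemma counterAt_zero (V : OneVASS Q) (z : ℕ) (π : List Q) : counterAt V z π 0 = z := by
  cases π <;> simp [counterAt, pathWeight]

lemma counterAt_cons_succ (V : OneVASS Q) (z : ℕ) (a b : Q) (l : List Q) (z' : ℕ)
    (hz : (z' : ℤ) = z + V.w a b) (i : ℕ) :
    counterAt V z (a :: b :: l) (i + 1) = counterAt V z' (b :: l) i := by
  show (z : ℤ) + pathWeight V ((a :: b :: l).take (i + 2)) =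
    (z' : ℤ) + pathWeight V ((b :: l).take (i + 1))
  rw [show (a :: b :: l).take (i+2) = a :: b :: l.take i from rfl,
    show (b :: l).take (i+1) = b :: l.take i from rfl, pathWeight_cons, hz]
  ring
lemma validRun_to_chain (V : OneVASS Q) (π : List Q) :
    ∀ (z : ℕ), IsValidRun V π z →
      ∀ a b (z' : ℕ), π.head? = some a → π.getLast? = some b →
        (z' : ℤ) = z + pathWeight V π →
        z ∈ V.D a ∧ z' ∈ V.D b ∧ Relation.ReflTransGen (Step V) (a, z) (b, z') := by
  induction π with
  | nil => intro z h; exact h.1.1.elim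
  | cons x rest ih =>
    cases rest with
    | nil =>
      intro z h a b z' ha hb hz'
      simp only [List.head?_cons, Option.some.injEq] at ha
      simp only [List.getLast?_singleton, Option.some.injEq] at hb
      have hz : z' = z := by
        have h0 : pathWeight V [x] = 0 := rfl
        rw [h0] at hz'; omega
      subst hz; subst ha; subst hb
      have hg := h.2 0 (by simp)
      rw [counterAt_zero] at hg
      simp only [Int.toNat_natCast] at hg
      exact ⟨hg, hg, Relation.ReflTransGen.refl⟩
    | cons y l =>
      intro z h a b z' ha hb hz'
      simp only [List.head?_cons, Option.some.injEq] at ha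
      obtain ⟨⟨hpath, hnn⟩, hguard⟩ := h
      obtain ⟨hd, hpath'⟩ := hpath
      have hnn1 : (0:ℤ) ≤ (z : ℤ) + V.w x y := by
        have h1 := hnn 1 (by simp)
        have hc1 : counterAt V z (x :: y :: l) 1 = (z : ℤ) + V.w x y := by
          show (z : ℤ) + pathWeight V [x, y] = (z : ℤ) + V.w x y
          rw [pathWeight_cons]
          show (z:ℤ) + (V.w x y + 0) = _
          ring
        rwa [hc1] at h1
      set z₁ : ℕ := ((z : ℤ) + V.w x y).toNat with hz₁def
      have hz₁ : (z₁ : ℤ) = (z : ℤ) + V.w x y := Int.toNat_of_nonneg hnn1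
      have hvalid' : IsValidRun V (y :: l) z₁ := by
        refine ⟨⟨hpath', fun i hi => ?_⟩, fun i hi => ?_⟩
        · rw [← counterAt_cons_succ V z x y l z₁ hz₁ i]
          exact hnn (i+1) (by simpa using Nat.succ_lt_succ hi)
        · have hg := hguard (i+1) (by simpa using Nat.succ_lt_succ hi)
          rwa [counterAt_cons_succ V z x y l z₁ hz₁ i] at hg
      have hrec := ih z₁ hvalid' y b z' (by simp)
        (by rw [← List.getLast?_cons_cons (a := x)]; exact hb)
        (by rw [hz', pathWeight_cons, hz₁]; ring)
      have hga : z ∈ V.D x := by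
        have hg := hguard 0 (by simp)
        rw [counterAt_zero] at hg
        simpa using hg
      subst ha
      refine ⟨hga, hrec.2.1, Relation.ReflTransGen.head ?_ hrec.2.2⟩
      exact ⟨hd, hz₁, hga, hrec.1⟩
lemma chain_to_reaches (V : OneVASS Q) (c c' : Q × ℕ) (h0 : c'.2 ∈ V.D c'.1)
    (h : Relation.ReflTransGen (Step V) c c') (hm : c.2 ∈ V.D c.1) : Reaches V c c' := by
  induction h using Relation.ReflTransGen.head_induction_on with
  | refl =>
    refine ⟨[c'.1], ⟨⟨trivial, ?_⟩, ?_⟩, rfl, rfl, ?_⟩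
    · intro i hi
      have h1 : i = 0 := Nat.lt_one_iff.mp (by simpa using hi)
      subst h1
      rw [counterAt_zero]; positivity
    · intro i hi
      have h1 : i = 0 := Nat.lt_one_iff.mp (by simpa using hi)
      subst h1
      rw [counterAt_zero]; simpa using h0
    · show (c'.2 : ℤ) = (c'.2 : ℤ) + pathWeight V [c'.1]
      show (c'.2 : ℤ) = (c'.2 : ℤ) + 0
      ring
  | head hstep hchain ih =>
    rename_i d mid
    obtain ⟨π, ⟨⟨hpath, hnn⟩, hguard⟩, hhead, hlast, hwt⟩ := ih hstep.2.2.2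
    obtain ⟨hd, hz, hda, hdm⟩ := hstep
    cases π with
    | nil => simp at hhead
    | cons m rest =>
      simp only [List.head?_cons, Option.some.injEq] at hhead
      subst hhead
      refine ⟨d.1 :: mid.1 :: rest, ⟨⟨⟨hd, hpath⟩, ?_⟩, ?_⟩, rfl, ?_, ?_⟩
      · intro i hi
        cases i with
        | zero => rw [counterAt_zero]; positivity
        | succ j =>
          rw [counterAt_cons_succ V d.2 d.1 mid.1 rest mid.2 hz j]
          exact hnn j (by simpa using hi)
      · intro i hi
        cases i with
        | zero => rw [counterAt_zero]; simpa using hda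
        | succ j =>
          have hj : j < (mid.1 :: rest).length := by simpa using hi
          rw [counterAt_cons_succ V d.2 d.1 mid.1 rest mid.2 hz j]
          exact hguard j hj
      · rw [List.getLast?_cons_cons]; exact hlast
      · show (c'.2 : ℤ) = (d.2 : ℤ) + pathWeight V (d.1 :: mid.1 :: rest)
        rw [pathWeight_cons, hwt, hz]; ring

lemma reaches_iff (V : OneVASS Q) (c c' : Q × ℕ) :
    Reaches V c c' ↔ c.2 ∈ V.D c.1 ∧ c'.2 ∈ V.D c'.1 ∧ Relation.ReflTransGen (Step V) c c' := by
  constructor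
  · rintro ⟨π, hval, hhead, hlast, hwt⟩
    exact validRun_to_chain V π c.2 hval c.1 c'.1 c'.2 hhead hlast hwt
  · rintro ⟨h1, h2, h3⟩
    exact chain_to_reaches V c c' h2 h3 h1
lemma step_lift (V : OneVASS Q) (t : Q) {c c' : Q × ℕ} (h : Step V c c')
    (hc : Relation.ReflTransGen V.delta c.1 t) (hc' : Relation.ReflTransGen V.delta c'.1 t) :
    Step (coverReduction V t) (some ⟨c.1, hc⟩, c.2) (some ⟨c'.1, hc'⟩, c'.2) :=
  ⟨h.1, h.2.1, h.2.2.1, h.2.2.2⟩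

lemma chain_lift (V : OneVASS Q) (t : Q) : ∀ {c c' : Q × ℕ}, Relation.ReflTransGen (Step V) c c' →
    ∀ (hc : Relation.ReflTransGen V.delta c.1 t) (hc' : Relation.ReflTransGen V.delta c'.1 t),
    Relation.ReflTransGen (Step (coverReduction V t)) (some ⟨c.1, hc⟩, c.2) (some ⟨c'.1, hc'⟩, c'.2) := by
  intro c c' h
  induction h using Relation.ReflTransGen.head_induction_on with
  | refl => intro hc hc'; exact Relation.ReflTransGen.refl
  | head hstep hchain ih =>
    rename_i d mid
    intro hc hc'
    have hmid : Relation.ReflTransGen V.delta mid.1 t :=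
      (Relation.ReflTransGen.lift (r := Step V) (p := V.delta) Prod.fst (fun a b hab => hab.1) _ _ hchain).trans hc'
    exact Relation.ReflTransGen.head (step_lift V t hstep hc hmid) (ih hmid hc')

lemma step_none (V : OneVASS Q) (t : Q) (n : ℕ) :
    Step (coverReduction V t) ((none : Option {q : Q // Relation.ReflTransGen V.delta q t}), n) (none, n+1) :=
  ⟨trivial, by push_cast; show ((n:ℤ)+1) = n + 1; ring, trivial, trivial⟩

lemma chain_none (V : OneVASS Q) (t : Q) (n k : ℕ) :
    Relation.ReflTransGen (Step (coverReduction V t))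
      ((none : Option {q : Q // Relation.ReflTransGen V.delta q t}), n) (none, n+k) := by
  induction k with
  | zero => exact Relation.ReflTransGen.refl
  | succ j ih => exact ih.tail (step_none V t (n+j))

lemma none_chain_none (V : OneVASS Q) (t : Q) : ∀ {c c' : Option {q : Q // Relation.ReflTransGen V.delta q t} × ℕ},
    Relation.ReflTransGen (Step (coverReduction V t)) c c' → c.1 = none → c'.1 = none := by
  intro c c' h
  induction h with
  | refl => exact id
  | tail hab hstep ih =>
    rename_i u v
    intro h0
    have hb := ih h0
    have h1 := hstep.1
    cases hv : v.1 with
    | none => rfl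
    | some p => rw [hb, hv] at h1; exact h1.elim

lemma proj_chain (V : OneVASS Q) (t : Q) : ∀ {c c' : Option {q : Q // Relation.ReflTransGen V.delta q t} × ℕ},
    Relation.ReflTransGen (Step (coverReduction V t)) c c' →
    ∀ a x b y, c = (some a, x) → c' = (some b, y) →
      Relation.ReflTransGen (Step V) (a.1, x) (b.1, y) := by
  intro c c' h
  induction h using Relation.ReflTransGen.head_induction_on with
  | refl =>
    intro a x b y h1 h2
    rw [h1] at h2
    obtain ⟨rfl, rfl⟩ : a = b ∧ x = y := by simpa using h2
    exact Relation.ReflTransGen.refl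
  | head hstep hchain ih =>
    rename_i d mid
    intro a x b y h1 h2
    subst h1
    obtain ⟨mq, mz⟩ := mid
    cases mq with
    | none =>
      have := none_chain_none V t hchain rfl
      rw [h2] at this
      exact absurd this (by simp)
    | some p =>
      refine Relation.ReflTransGen.head ?_ (ih p mz b y rfl h2)
      exact ⟨hstep.1, hstep.2.1, hstep.2.2.1, hstep.2.2.2⟩

lemma chain_to_none (V : OneVASS Q) (t : Q) : ∀ {c c' : Option {q : Q // Relation.ReflTransGen V.delta q t} × ℕ},
    Relation.ReflTransGen (Step (coverReduction V t)) c c' →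
    ∀ a x, c = (some a, x) → c'.1 = none →
      ∃ z', z' ∈ V.D t ∧ Relation.ReflTransGen (Step V) (a.1, x) (t, z') := by
  intro c c' h
  induction h using Relation.ReflTransGen.head_induction_on with
  | refl =>
    intro a x h1 h2
    rw [h1] at h2
    exact absurd h2 (by simp)
  | head hstep hchain ih =>
    rename_i d mid
    intro a x h1 h2
    subst h1
    obtain ⟨mq, mz⟩ := mid
    cases mq with
    | some p =>
      obtain ⟨z', hz', hch⟩ := ih p mz rfl h2
      refine ⟨z', hz', Relation.ReflTransGen.head (b := (p.1, mz)) ?_ hch⟩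
      exact ⟨hstep.1, hstep.2.1, hstep.2.2.1, hstep.2.2.2⟩
    | none =>
      obtain ⟨q, hqt⟩ := a
      have ht : q = t := hstep.1
      have hx : x ∈ V.D q := hstep.2.2.1
      subst ht
      exact ⟨x, hx, Relation.ReflTransGen.refl⟩
lemma bound_mem (V : OneVASS Q) (q : Q) : ∃ b : ℕ, ∀ z, b ≤ z → z ∈ V.D q := by
  obtain ⟨b, hb⟩ := (V.cofinite q).bddAbove
  refine ⟨b + 1, fun z hz => ?_⟩
  by_contra h
  have := hb h
  omega

lemma reach_large (V : OneVASS Q) (t : Q) : ∀ q : Q, Relation.ReflTransGen V.delta q t →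
    ∃ B : ℕ, ∀ z : ℕ, B ≤ z → z ∈ V.D q ∧
      ∃ z' : ℕ, z' ∈ V.D t ∧ Relation.ReflTransGen (Step V) (q, z) (t, z') := by
  intro q h
  induction h using Relation.ReflTransGen.head_induction_on with
  | refl =>
    obtain ⟨b, hb⟩ := bound_mem V t
    exact ⟨b, fun z hz => ⟨hb z hz, z, hb z hz, Relation.ReflTransGen.refl⟩⟩
  | head hstep hchain ih =>
    rename_i q₀ q₁
    obtain ⟨B₁, h1⟩ := ih
    obtain ⟨bq, hbq⟩ := bound_mem V q₀
    refine ⟨max bq ((B₁ : ℤ) - V.w q₀ q₁).toNat, fun z hz => ?_⟩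
    have hz1 : bq ≤ z := le_trans (le_max_left _ _) hz
    have hz2 : ((B₁ : ℤ) - V.w q₀ q₁).toNat ≤ z := le_trans (le_max_right _ _) hz
    have hz2' : (B₁ : ℤ) - V.w q₀ q₁ ≤ (z : ℤ) := by
      calc (B₁ : ℤ) - V.w q₀ q₁ ≤ (((B₁ : ℤ) - V.w q₀ q₁).toNat : ℤ) := Int.self_le_toNat _
        _ ≤ (z : ℤ) := by exact_mod_cast hz2
    have hnn : (0 : ℤ) ≤ (z : ℤ) + V.w q₀ q₁ := by
      have : (0:ℤ) ≤ (B₁ : ℤ) := Int.natCast_nonneg B₁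
      linarith
    set z₁ : ℕ := ((z : ℤ) + V.w q₀ q₁).toNat with hz₁def
    have hz₁ : (z₁ : ℤ) = (z : ℤ) + V.w q₀ q₁ := Int.toNat_of_nonneg hnn
    have hB₁ : B₁ ≤ z₁ := by
      have : (B₁ : ℤ) ≤ (z₁ : ℤ) := by rw [hz₁]; linarith
      exact_mod_cast this
    obtain ⟨hmem1, z', hz', hch⟩ := h1 z₁ hB₁
    refine ⟨hbq z hz1, z', hz', Relation.ReflTransGen.head ?_ hch⟩
    exact ⟨hstep, hz₁, hbq z hz1, hmem1⟩

lemma infinite_fiber {A : Type} [Finite A] {S : Set (A × ℕ)} (hS : S.Infinite) :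
    ∃ a : A, {z : ℕ | (a, z) ∈ S}.Infinite := by
  by_contra h
  push_neg at h
  have : S ⊆ ⋃ a ∈ (Set.univ : Set A), (fun z => (a, z)) '' {z : ℕ | (a, z) ∈ S} := by
    rintro ⟨a, z⟩ hz
    exact Set.mem_biUnion (Set.mem_univ a) ⟨z, hz, rfl⟩
  exact hS (Set.Finite.subset (Set.Finite.biUnion Set.finite_univ
    (fun a _ => (h a).image _)) this)

lemma infinite_exists_ge {S : Set ℕ} (hS : S.Infinite) (B : ℕ) : ∃ z ∈ S, B ≤ z := by
  by_contra h
  push_neg at h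
  exact hS (Set.Finite.subset (Set.finite_Iio B) (fun z hz => h z hz))

/-- if `t` is reachable from `s` in the underlying graph, then `(s,0)` covers `t`
in `V` iff `(s,0)` is unbounded in the reduced 1-VASS `V'`. -/
theorem coverability_iff_unboundedness_of_reduction
    {Q : Type} [Fintype Q] (V : OneVASS Q) (s t : Q)
    (hst : Relation.ReflTransGen V.delta s t) :
    Covers V s t ↔ Unbounded (coverReduction V t) (some ⟨s, hst⟩, 0) := by
  constructor
  · rintro ⟨z, hz⟩
    obtain ⟨h0, hzt, hch⟩ := (reaches_iff V (s, 0) (t, z)).mp hz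
    have hlift := chain_lift V t hch hst Relation.ReflTransGen.refl
    have hstepn : Step (coverReduction V t)
        ((some ⟨t, Relation.ReflTransGen.refl⟩ :
          Option {q : Q // Relation.ReflTransGen V.delta q t}), z) (none, z) := by
      refine ⟨rfl, ?_, hzt, trivial⟩
      show (z : ℤ) = (z : ℤ) + 0
      ring
    apply Set.infinite_of_injective_forall_mem
      (f := fun k : ℕ => ((none : Option {q : Q // Relation.ReflTransGen V.delta q t}), z + k))
    · intro k1 k2 h
      have : z + k1 = z + k2 := by simpa using h
      omega
    · intro k
      refine (reaches_iff (coverReduction V t) _ _).mpr ⟨h0, trivial, ?_⟩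
      exact ((hlift.tail hstepn).trans (chain_none V t z k))
  · intro hU
    haveI h1 : Finite {q : Q // Relation.ReflTransGen V.delta q t} := Subtype.finite
    haveI h2 : Finite (Option {q : Q // Relation.ReflTransGen V.delta q t}) :=
      Finite.of_equiv _ (Equiv.optionEquivSumPUnit.{0,0} _).symm
    obtain ⟨q', hq'⟩ := infinite_fiber hU
    obtain ⟨z₀, hz₀⟩ := hq'.nonempty
    have h0 : (0 : ℕ) ∈ V.D s := ((reaches_iff _ _ _).mp hz₀).1
    cases q' with
    | none =>
      have hch := ((reaches_iff _ _ _).mp hz₀).2.2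
      obtain ⟨z', hz', hch2⟩ := chain_to_none V t hch ⟨s, hst⟩ 0 rfl rfl
      exact ⟨z', (reaches_iff V (s, 0) (t, z')).mpr ⟨h0, hz', hch2⟩⟩
    | some p =>
      obtain ⟨B, hB⟩ := reach_large V t p.1 p.2
      obtain ⟨z, hzS, hzB⟩ := infinite_exists_ge hq' B
      have hch := ((reaches_iff _ _ _).mp hzS).2.2
      have hproj := proj_chain V t hch ⟨s, hst⟩ 0 p z rfl rfl
      obtain ⟨-, z', hz', hch2⟩ := hB z hzB
      exact ⟨z', (reaches_iff V (s, 0) (t, z')).mpr ⟨h0, hz', hproj.trans hch2⟩⟩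


end VASSPaper
end

section
/- Let V=(Q,D,Δ,w) be a 1-VASS with disequality tests and s ∈ Q. The configuration (s,0) is unbounded if and only if there exists an unbounded configuration in Conf_+ that is reachable from (s,0). -/
namespace VASSPaper

variable {Q : Type}

section Aux

variable (V : OneVASS Q)

@[simp] lemma pathWeight_nil : pathWeight V [] = 0 := rfl
@[simp] lemma pathWeight_singleton (a : Q) : pathWeight V [a] = 0 := rfl

@[simp] lemma pathWeight_cons_cons (a b : Q) (l : List Q) :
    pathWeight V (a :: b :: l) = V.w a b + pathWeight V (b :: l) := by
  simp [pathWeight]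

lemma pathWeight_append (xs : List Q) (a : Q) (ys : List Q) :
    pathWeight V (xs ++ a :: ys) = pathWeight V (xs ++ [a]) + pathWeight V (a :: ys) := by
  induction xs with
  | nil => simp
  | cons x xs ih =>
    cases xs with
    | nil => simp
    | cons x' xs' =>
      simp only [List.cons_append, pathWeight_cons_cons] at *
      omega

lemma IsPath.ne_nil {π : List Q} (h : IsPath V π) : π ≠ [] := by
  cases π with
  | nil => exact absurd h (by simp [IsPath])
  | cons a l => simp

lemma isPath_append_iff (xs : List Q) (a : Q) (ys : List Q) :
    IsPath V (xs ++ a :: ys) ↔ IsPath V (xs ++ [a]) ∧ IsPath V (a :: ys) := by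
  induction xs with
  | nil => simp [IsPath]
  | cons x xs ih =>
    cases xs with
    | nil => simp [IsPath]
    | cons x' xs' =>
      simp only [List.cons_append, List.append_eq, IsPath] at *
      rw [ih]; tauto

lemma isPath_iff_chain' (π : List Q) : IsPath V π ↔ π ≠ [] ∧ π.Chain' V.delta := by
  induction π with
  | nil => simp [IsPath]
  | cons a l ih =>
    cases l with
    | nil => simp [IsPath, List.Chain', List.isChain_singleton]
    | cons b l' =>
      simp only [IsPath, List.Chain', List.isChain_cons_cons] at *
      constructor
      · rintro ⟨h1, h2⟩
        exact ⟨by simp, h1, (ih.mp h2).2⟩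
      · rintro ⟨-, h1, h2⟩
        exact ⟨h1, ih.mpr ⟨by simp, h2⟩⟩

lemma foldr_min_le_init (l : List ℤ) (b : ℤ) : l.foldr min b ≤ b := by
  induction l with
  | nil => exact le_refl b
  | cons x l ih => exact le_trans (min_le_right _ _) ih

lemma foldr_min_le_mem (l : List ℤ) (b : ℤ) {x : ℤ} (hx : x ∈ l) : l.foldr min b ≤ x := by
  induction l with
  | nil => cases hx
  | cons y l ih =>
    rcases List.mem_cons.mp hx with h | h
    · exact h ▸ min_le_left _ _
    · exact le_trans (min_le_right _ _) (ih h)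

lemma pmin_nonpos (π : List Q) : pmin V π ≤ 0 := foldr_min_le_init _ _

lemma pmin_le_take (π : List Q) (i : ℕ) (hi : i ≤ π.length) :
    pmin V π ≤ pathWeight V (π.take i) := by
  apply foldr_min_le_mem
  exact List.mem_map_of_mem (List.mem_range.mpr (by omega))

lemma head?_append_cons (xs : List Q) (a : Q) (t t' : List Q) :
    (xs ++ a :: t).head? = (xs ++ a :: t').head? := by
  cases xs <;> simp

lemma counterAt_append_left (z : ℕ) (xs ys : List Q) (i : ℕ) (hi : i < xs.length) :
    counterAt V z (xs ++ ys) i = counterAt V z xs i := by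
  unfold counterAt
  rw [List.take_append_of_le_length (by omega)]

lemma counterAt_append_right (z z' : ℕ) (xs ys : List Q) (a : Q)
    (hz : (z' : ℤ) = (z : ℤ) + pathWeight V (xs ++ [a])) (j : ℕ) :
    counterAt V z ((xs ++ [a]) ++ ys) (xs.length + 1 + j) = counterAt V z' (a :: ys) (j + 1) := by
  unfold counterAt
  have h1 : xs.length + 1 + j + 1 = (xs ++ [a]).length + (j + 1) := by simp; omega
  rw [h1, List.take_append, Nat.add_sub_cancel_left, List.take_of_length_le (Nat.le_add_right _ _)]
  have h2 : (xs ++ [a]) ++ ys.take (j+1) = xs ++ a :: ys.take (j+1) := by simp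
  rw [h2, pathWeight_append]
  have h3 : (a :: ys).take (j + 1 + 1) = a :: ys.take (j+1) := rfl
  rw [h3, hz]
  ring

lemma validRun_glue (xs ys : List Q) (a : Q) (z z' : ℕ)
    (h1 : IsValidRun V (xs ++ [a]) z) (h2 : IsValidRun V (a :: ys) z')
    (hz : (z' : ℤ) = (z : ℤ) + pathWeight V (xs ++ [a])) :
    IsValidRun V (xs ++ a :: ys) z := by
  have hassoc : xs ++ a :: ys = (xs ++ [a]) ++ ys := by simp
  have hlen : (xs ++ a :: ys).length = xs.length + 1 + ys.length := by
    simp only [List.length_append, List.length_cons]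
    omega
  have hcnt : ∀ i, i < (xs ++ a :: ys).length →
      (counterAt V z (xs ++ a :: ys) i = counterAt V z (xs ++ [a]) i ∧ i < (xs ++ [a]).length) ∨
      (∃ j, i = xs.length + 1 + j ∧ j + 1 < (a :: ys).length ∧
        counterAt V z (xs ++ a :: ys) i = counterAt V z' (a :: ys) (j + 1)) := by
    intro i hi
    by_cases hcase : i < xs.length + 1
    · left
      constructor
      · rw [hassoc, counterAt_append_left V z _ _ i (by simp; omega)]
      · simp; omega
    · right
      set j := i - (xs.length + 1) with hjdef
      have hieq : i = xs.length + 1 + j := by omega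
      refine ⟨j, hieq, by simp only [List.length_cons]; omega, ?_⟩
      rw [hassoc, hieq, counterAt_append_right V z z' xs ys a hz]
  have hget : ∀ (i : ℕ) (hi : i < (xs ++ a :: ys).length),
      (∀ hi' : i < (xs ++ [a]).length, i < xs.length + 1 →
        (xs ++ a :: ys).get ⟨i, hi⟩ = (xs ++ [a]).get ⟨i, hi'⟩) ∧
      (∀ j (hj : j + 1 < (a :: ys).length), i = xs.length + 1 + j →
        (xs ++ a :: ys).get ⟨i, hi⟩ = (a :: ys).get ⟨j + 1, hj⟩) := by
    intro i hi
    constructor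
    · intro hi' hlt
      simp only [List.get_eq_getElem]
      rcases Nat.lt_or_ge i xs.length with hx | hx
      · rw [List.getElem_append_left hx, List.getElem_append_left hx]
      · have hix : i = xs.length := by omega
        subst hix
        rw [List.getElem_append_right (le_refl _), List.getElem_append_right (le_refl _)]
        simp
    · intro j hj hij
      simp only [List.get_eq_getElem]
      have : (xs ++ a :: ys)[i] = (a :: ys)[i - xs.length] :=
        List.getElem_append_right (by omega)
      rw [this]
      congr 1
      omega
  obtain ⟨⟨hp1, hn1⟩, hg1⟩ := h1
  obtain ⟨⟨hp2, hn2⟩, hg2⟩ := h2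
  refine ⟨⟨(isPath_append_iff V xs a ys).mpr ⟨hp1, hp2⟩, ?_⟩, ?_⟩
  · intro i hi
    rcases hcnt i hi with ⟨heq, hlt⟩ | ⟨j, hij, hj, heq⟩
    · rw [heq]; exact hn1 i hlt
    · rw [heq]; exact hn2 (j+1) hj
  · intro i hi
    rcases hcnt i hi with ⟨heq, hlt⟩ | ⟨j, hij, hj, heq⟩
    · rw [heq, (hget i hi).1 hlt (by simp at hlt; omega)]
      exact hg1 i hlt
    · rw [heq, (hget i hi).2 j hj hij]
      exact hg2 (j+1) hj

lemma pathWeight_glue (xs ys : List Q) (a : Q) :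
    pathWeight V (xs ++ a :: ys) = pathWeight V (xs ++ [a]) + pathWeight V (a :: ys) :=
  pathWeight_append V xs a ys

lemma reaches_trans {c₁ c₂ c₃ : Q × ℕ} (h12 : Reaches V c₁ c₂) (h23 : Reaches V c₂ c₃) :
    Reaches V c₁ c₃ := by
  obtain ⟨π, hπv, hπh, hπl, hπw⟩ := h12
  obtain ⟨ρ, hρv, hρh, hρl, hρw⟩ := h23
  have hπne : π ≠ [] := (hπv.1.1).ne_nil V
  have hπeq : π = π.dropLast ++ [c₂.1] := by
    have h := List.dropLast_append_getLast hπne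
    have : π.getLast hπne = c₂.1 := by
      rw [List.getLast?_eq_getLast hπne] at hπl
      exact Option.some_inj.mp hπl
    rw [← this]; exact h.symm
  obtain ⟨b, t, rfl⟩ : ∃ b t, ρ = b :: t := by
    cases ρ with
    | nil => simp at hρh
    | cons b t => exact ⟨b, t, rfl⟩
  have hb : b = c₂.1 := by simpa using hρh
  subst hb
  refine ⟨π.dropLast ++ c₂.1 :: t, ?_, ?_, ?_, ?_⟩
  · refine validRun_glue V _ _ _ _ _ ?_ hρv ?_
    · rw [← hπeq]; exact hπv
    · rw [← hπeq]; exact hπw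
  · rw [head?_append_cons π.dropLast c₂.1 t [], ← hπeq]
    exact hπh
  · rw [List.getLast?_append_of_ne_nil _ (by simp)]
    exact hρl
  · rw [pathWeight_glue, ← hπeq, hρw, hπw]
    ring

lemma validRun_take {π : List Q} {z : ℕ} (h : IsValidRun V π z) (n : ℕ) (h1 : 1 ≤ n)
    (h2 : n ≤ π.length) : IsValidRun V (π.take n) z := by
  obtain ⟨⟨hp, hn⟩, hg⟩ := h
  have hlen : (π.take n).length = n := by rw [List.length_take]; omega
  have hcnt : ∀ i, i < n → counterAt V z (π.take n) i = counterAt V z π i := by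
    intro i hi
    unfold counterAt
    have hmin : min (i+1) n = i + 1 := by omega
    rw [List.take_take, hmin]
  refine ⟨⟨?_, ?_⟩, ?_⟩
  · refine (isPath_iff_chain' V _).mpr ⟨?_, ((isPath_iff_chain' V π).mp hp).2.take n⟩
    intro hnil
    have h0 : (π.take n).length = 0 := by rw [hnil]; rfl
    omega
  · intro i hi
    have hi2 : i < n := by omega
    rw [hcnt i hi2]
    exact hn i (by omega)
  · intro i hi
    have hi' : i < n := by rwa [hlen] at hi
    rw [hcnt i hi']
    have hget : (π.take n).get ⟨i, hi⟩ = π.get ⟨i, by omega⟩ := by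
      simp only [List.get_eq_getElem]
      exact List.getElem_take
    rw [hget]
    exact hg i (by omega)

lemma reaches_get {π : List Q} {z : ℕ} (h : IsValidRun V π z) {s : Q} (hs : π.head? = some s)
    (i : ℕ) (hi : i < π.length) :
    Reaches V (s, z) (π.get ⟨i, hi⟩, (counterAt V z π i).toNat) := by
  refine ⟨π.take (i+1), validRun_take V h (i+1) (by omega) (by omega), ?_, ?_, ?_⟩
  · cases π with
    | nil => simp at hi
    | cons a l => simpa using hs
  · have h1 : π.take (i+1) = π.take i ++ [π[i]] := by
      rw [List.take_succ, List.getElem?_eq_getElem hi]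
      rfl
    rw [h1, List.getLast?_append_of_ne_nil _ (by simp)]
    simp [List.get_eq_getElem]
  · show ((counterAt V z π i).toNat : ℤ) = (z : ℤ) + pathWeight V (π.take (i+1))
    rw [Int.toNat_of_nonneg (h.1.2 i hi)]
    rfl

section Bounds

variable [Fintype Q]

noncomputable def guardBound (V : OneVASS Q) : ℕ :=
  (Finset.univ.sup fun q : Q => (V.cofinite q).toFinset.sup id) + 1

lemma mem_D_of_guardBound_le (q : Q) (n : ℕ) (h : guardBound V ≤ n) : n ∈ V.D q := by
  by_contra hn
  have hmem : n ∈ (V.cofinite q).toFinset := by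
    rw [Set.Finite.mem_toFinset]
    exact hn
  have h1 : n ≤ (V.cofinite q).toFinset.sup id := Finset.le_sup (f := id) hmem
  have h2 : (V.cofinite q).toFinset.sup id ≤
      Finset.univ.sup fun q : Q => (V.cofinite q).toFinset.sup id :=
    Finset.le_sup (f := fun q : Q => (V.cofinite q).toFinset.sup id) (Finset.mem_univ q)
  have : guardBound V ≤ (Finset.univ.sup fun q : Q => (V.cofinite q).toFinset.sup id) := by omega
  unfold guardBound at this
  omega

lemma isValidRun_of_le_pmin {π : List Q} (hp : IsPath V π) (z : ℕ)
    (h : (guardBound V : ℤ) ≤ (z : ℤ) + pmin V π) : IsValidRun V π z := by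
  have key : ∀ i, i < π.length → (guardBound V : ℤ) ≤ counterAt V z π i := by
    intro i hi
    have := pmin_le_take V π (i+1) (by omega)
    unfold counterAt
    omega
  refine ⟨⟨hp, fun i hi => le_trans (by positivity) (key i hi)⟩, fun i hi => ?_⟩
  apply mem_D_of_guardBound_le
  have := key i hi
  omega

lemma tail_getLast? (π : List Q) (h2 : 2 ≤ π.length) : π.tail.getLast? = π.getLast? := by
  cases π with
  | nil => simp at h2
  | cons a t =>
    cases t with
    | nil => simp at h2
    | cons b t' =>
      show (b :: t').getLast? = (a :: b :: t').getLast?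
      rw [show a :: b :: t' = [a] ++ (b :: t') from rfl,
        List.getLast?_append_of_ne_nil _ (by simp)]

lemma pump (q : Q) (π : List Q) (hc : IsCycleOn V π q) (hw : 0 ≤ pathWeight V π) (z : ℕ)
    (hg : (guardBound V : ℤ) ≤ (z : ℤ) + pmin V π) :
    ∀ k, IsValidRun V (iterCycle π k) z ∧ (iterCycle π k).head? = some q ∧
      (iterCycle π k).getLast? = some q ∧
      pathWeight V (iterCycle π k) = (k + 1) * pathWeight V π := by
  obtain ⟨hp, h2, hh, hl⟩ := hc
  intro k
  induction k with
  | zero => exact ⟨isValidRun_of_le_pmin V hp z hg, hh, hl, by rw [iterCycle]; ring⟩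
  | succ k ih =>
    obtain ⟨ihv, ihh, ihl, ihw⟩ := ih
    obtain ⟨t, rfl⟩ : ∃ t, π = q :: t := by
      cases π with
      | nil => simp at hh
      | cons a t => exact ⟨t, by simpa using hh⟩
    have htne : t ≠ [] := by
      intro h; subst h; simp at h2
    set L := iterCycle (q :: t) k with hL
    have hLne : L ≠ [] := (ihv.1.1).ne_nil V
    have hLeq : L = L.dropLast ++ [q] := by
      have h := List.dropLast_append_getLast hLne
      have : L.getLast hLne = q := by
        rw [List.getLast?_eq_getLast hLne] at ihl
        exact Option.some_inj.mp ihl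
      rw [← this]; exact h.symm
    have hiter : iterCycle (q :: t) (k + 1) = L.dropLast ++ q :: t := by
      show L ++ (q :: t).tail = _
      rw [List.tail_cons]
      conv_lhs => rw [hLeq]
      simp
    set z' : ℕ := z + ((k + 1) * pathWeight V (q :: t)).toNat with hz'def
    have hwpos : (0 : ℤ) ≤ (k + 1) * pathWeight V (q :: t) := by positivity
    have hz' : (z' : ℤ) = (z : ℤ) + pathWeight V (L.dropLast ++ [q]) := by
      rw [← hLeq, ihw, hz'def]
      push_cast
      omega
    have hval2 : IsValidRun V (q :: t) z' := by
      apply isValidRun_of_le_pmin V hp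
      have hzz' : (z : ℤ) ≤ (z' : ℤ) := by rw [hz'def]; push_cast; omega
      omega
    refine ⟨?_, ?_, ?_, ?_⟩
    · rw [hiter]
      exact validRun_glue V _ _ _ _ _ (hLeq ▸ ihv) hval2 hz'
    · rw [hiter, head?_append_cons L.dropLast q t [], ← hLeq]
      exact ihh
    · rw [hiter, List.getLast?_append_of_ne_nil _ (by simp)]
      exact hl
    · rw [hiter, pathWeight_glue, ← hLeq, ihw]
      push_cast
      ring

lemma unbounded_of_cycle (q : Q) (π : List Q) (hc : IsCycleOn V π q)
    (hpos : 0 < pathWeight V π) (z : ℕ)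
    (hg : (guardBound V : ℤ) ≤ (z : ℤ) + pmin V π) : Unbounded V (q, z) := by
  have hW : 1 ≤ (pathWeight V π).toNat := by omega
  refine Set.infinite_of_injective_forall_mem
    (f := fun k : ℕ => ((q, z + (k + 1) * (pathWeight V π).toNat) : Q × ℕ)) ?_ ?_
  · intro a b hab
    simp only [Prod.mk.injEq, true_and] at hab
    have := Nat.eq_of_mul_eq_mul_right hW (by omega : (a+1) * (pathWeight V π).toNat = (b+1) * (pathWeight V π).toNat)
    omega
  · intro k
    obtain ⟨hv, hh, hl, hw⟩ := pump V q π hc (le_of_lt hpos) z hg k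
    refine ⟨iterCycle π k, hv, hh, hl, ?_⟩
    show ((z + (k + 1) * (pathWeight V π).toNat : ℕ) : ℤ) = (z : ℤ) + pathWeight V (iterCycle π k)
    rw [hw]
    push_cast [Int.toNat_of_nonneg (le_of_lt hpos)]
    ring

end Bounds

lemma exists_dup_split {l : List Q} (h : ¬ l.Nodup) :
    ∃ (a : Q) (l₁ l₂ l₃ : List Q), l = l₁ ++ a :: (l₂ ++ a :: l₃) := by
  induction l with
  | nil => simp at h
  | cons x t ih =>
    by_cases hx : x ∈ t
    · obtain ⟨s, u, rfl⟩ := List.append_of_mem hx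
      exact ⟨x, [], s, u, by simp⟩
    · have hnd : ¬ t.Nodup := fun hn => h (List.nodup_cons.mpr ⟨hx, hn⟩)
      obtain ⟨a, l₁, l₂, l₃, rfl⟩ := ih hnd
      exact ⟨a, x :: l₁, l₂, l₃, by simp⟩

lemma qplus_of_cycle : ∀ (n : ℕ) (σ : List Q), σ.length ≤ n → IsPath V σ → 2 ≤ σ.length →
    σ.head? = σ.getLast? → 0 < pathWeight V σ → ∃ r ∈ σ, r ∈ Qplus V := by
  intro n
  induction n with
  | zero => intro σ h1 _ h3 _ _; omega
  | succ n ih =>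
    intro σ hlen hp h2 hcyc hpos
    have hne : σ ≠ [] := hp.ne_nil V
    by_cases hnd : σ.dropLast.Nodup
    · obtain ⟨h₀, σ', rfl⟩ : ∃ h₀ σ', σ = h₀ :: σ' := by
        cases σ with
        | nil => simp at hne
        | cons a l => exact ⟨a, l, rfl⟩
      refine ⟨h₀, List.mem_cons_self, (h₀ :: σ'), ⟨⟨hp, h2, rfl, ?_⟩, hnd⟩, hpos⟩
      rw [← hcyc]; rfl
    · obtain ⟨a, l₁, l₂, l₃, hsplit⟩ := exists_dup_split hnd
      set b := σ.getLast hne with hbdef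
      have hσ : σ = l₁ ++ a :: (l₂ ++ a :: (l₃ ++ [b])) := by
        conv_lhs => rw [← List.dropLast_append_getLast hne, hsplit]
        simp
        rfl
      have hσlen : σ.length = l₁.length + l₂.length + l₃.length + 3 := by
        rw [hσ]
        simp only [List.length_append, List.length_cons, List.length_singleton, List.length_nil]
        omega
      have hblast : σ.getLast? = some b := List.getLast?_eq_getLast hne
      -- paths
      have hp' : IsPath V (l₁ ++ a :: (l₂ ++ a :: (l₃ ++ [b]))) := hσ ▸ hp
      have split1 := (isPath_append_iff V l₁ a (l₂ ++ a :: (l₃ ++ [b]))).mp hp'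
      have hrw1 : a :: (l₂ ++ a :: (l₃ ++ [b])) = (a :: l₂) ++ a :: (l₃ ++ [b]) := by simp
      have split2 := (isPath_append_iff V (a :: l₂) a (l₃ ++ [b])).mp (hrw1 ▸ split1.2)
      -- weights
      have hwσ : pathWeight V σ =
          pathWeight V ((a :: l₂) ++ [a]) + pathWeight V (l₁ ++ a :: (l₃ ++ [b])) := by
        rw [hσ, pathWeight_append, hrw1, pathWeight_append V (a :: l₂) a (l₃ ++ [b]),
          pathWeight_append V l₁ a (l₃ ++ [b])]
        ring
      rcases lt_or_ge 0 (pathWeight V ((a :: l₂) ++ [a])) with hc1 | hc1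
      · -- recurse on inner cycle
        obtain ⟨r, hrmem, hrq⟩ := ih ((a :: l₂) ++ [a])
          (by simp only [List.length_append, List.length_cons, List.length_singleton, List.length_nil]; omega)
          split2.1 (by simp) (by rw [List.getLast?_append_of_ne_nil _ (by simp)]; rfl) hc1
        refine ⟨r, ?_, hrq⟩
        rw [hσ]
        simp at hrmem ⊢
        tauto
      · -- recurse on outer cycle
        have hc2 : 0 < pathWeight V (l₁ ++ a :: (l₃ ++ [b])) := by omega
        have hhead : (l₁ ++ a :: (l₃ ++ [b])).head? = σ.head? := by
          rw [hσ]
          exact (head?_append_cons l₁ a (l₃ ++ [b]) (l₂ ++ a :: (l₃ ++ [b]))).symm ▸ rfl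
        have hlast : (l₁ ++ a :: (l₃ ++ [b])).getLast? = some b := by
          rw [List.getLast?_append_of_ne_nil _ (by simp),
            show a :: (l₃ ++ [b]) = (a :: l₃) ++ [b] from by simp,
            List.getLast?_append_of_ne_nil _ (by simp)]
          rfl
        obtain ⟨r, hrmem, hrq⟩ := ih (l₁ ++ a :: (l₃ ++ [b]))
          (by simp only [List.length_append, List.length_cons, List.length_singleton, List.length_nil]; omega)
          ((isPath_append_iff V l₁ a (l₃ ++ [b])).mpr ⟨split1.1, split2.2⟩)
          (by simp; omega) (by rw [hhead, hcyc, hblast, hlast]) hc2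
        refine ⟨r, ?_, hrq⟩
        rw [hσ]
        simp at hrmem ⊢
        tauto

lemma list_get_congr {l : List Q} {i j : ℕ} (hi : i < l.length) (hj : j < l.length)
    (h : i = j) : l.get ⟨i, hi⟩ = l.get ⟨j, hj⟩ := by subst h; rfl

lemma counterAt_succ (z : ℕ) (π : List Q) (i : ℕ) (h : i + 1 < π.length) :
    counterAt V z π (i + 1) =
      counterAt V z π i + V.w (π.get ⟨i, by omega⟩) (π.get ⟨i + 1, h⟩) := by
  unfold counterAt
  have h1 : π.take (i + 1 + 1) = π.take (i + 1) ++ [π[i + 1]] := by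
    rw [List.take_succ, List.getElem?_eq_getElem h]
    rfl
  have h2 : π.take (i + 1) = π.take i ++ [π[i]'(by omega)] := by
    rw [List.take_succ, List.getElem?_eq_getElem (by omega : i < π.length)]
    rfl
  rw [h1, h2]
  rw [show (π.take i ++ [π[i]'(by omega)]) ++ [π[i+1]] =
    π.take i ++ π[i]'(by omega) :: [π[i+1]] from by rw [List.append_assoc]; rfl]
  rw [pathWeight_append V (π.take i) (π[i]'(by omega)) [π[i+1]]]
  simp only [List.get_eq_getElem, pathWeight_cons_cons, pathWeight_singleton]
  ring

end Aux


/-- `(s,0)` is unbounded iff it can reach an unbounded configuration of `Conf₊`. -/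
theorem unbounded_iff_reach_unbounded_confPlus
    {Q : Type} [Fintype Q] (V : OneVASS Q) (γ : Q → List Q) (hγ : GammaChoice V γ)
    (s : Q) :
    Unbounded V (s, 0) ↔
      ∃ c ∈ ConfPlus V γ, Unbounded V c ∧ Reaches V (s, 0) c := by
  constructor
  · intro hU
    -- some state has infinitely many reachable counter values
    have hfib : ∃ q0 : Q, {z : ℕ | Reaches V (s, 0) (q0, z)}.Infinite := by
      by_contra hcon
      push_neg at hcon
      refine hU ?_
      have hsub : {c' | Reaches V (s, 0) c'} ⊆
          ⋃ q : Q, (fun z => ((q, z) : Q × ℕ)) '' {z | Reaches V (s, 0) (q, z)} := by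
        rintro ⟨q, z⟩ hc
        exact Set.mem_iUnion.mpr ⟨q, ⟨z, hc, rfl⟩⟩
      exact Set.Finite.subset (Set.finite_iUnion fun q => (hcon q).image _) hsub
    obtain ⟨q0, hq0⟩ := hfib
    -- constants
    set Tp : ℕ := Finset.univ.sup (fun q : Q => (-(pmin V (γ q))).toNat) with hTp
    set T : ℕ := guardBound V + Tp + 1 with hT
    set Wm : ℕ := Finset.univ.sup (fun p : Q × Q => (V.w p.1 p.2).natAbs) with hWm
    set M : ℕ := Wm + 1 with hM
    set K : ℕ := Fintype.card Q + 1 with hK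
    obtain ⟨z, hzmem, hzbig⟩ := hq0.exists_gt (T + (K + 1) * M)
    obtain ⟨π, hπv, hπh, hπl, hπw⟩ := hzmem
    have hπw' : (z : ℤ) = pathWeight V π := by simpa using hπw
    set len := π.length with hlendef
    have hlen1 : 1 ≤ len := List.length_pos_iff.mpr ((hπv.1.1).ne_nil V)
    set v : ℕ → ℤ := counterAt V 0 π with hvdef
    have hv0 : v 0 = 0 := by
      show counterAt V 0 π 0 = 0
      unfold counterAt
      rw [List.take_succ, List.getElem?_eq_getElem (by omega : 0 < π.length)]
      simp
    have hvlast : v (len - 1) = z := by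
      show counterAt V 0 π (len - 1) = z
      unfold counterAt
      rw [show len - 1 + 1 = π.length from by omega, List.take_length]
      omega
    have hstep : ∀ i, i + 1 < len → v (i + 1) < v i + M ∧ v i < v (i + 1) + M := by
      intro i hi
      have h := counterAt_succ V 0 π i hi
      have hb : (V.w (π.get ⟨i, by omega⟩) (π.get ⟨i + 1, hi⟩)).natAbs ≤ Wm := by
        rw [hWm]
        exact Finset.le_sup (f := fun p : Q × Q => (V.w p.1 p.2).natAbs)
          (Finset.mem_univ (π.get ⟨i, by omega⟩, π.get ⟨i + 1, hi⟩))
      have hv1 : v (i + 1) = v i + V.w (π.get ⟨i, by omega⟩) (π.get ⟨i + 1, hi⟩) := h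
      omega
    -- the last low point
    have hP0 : v 0 ≤ (T : ℤ) := by rw [hv0]; positivity
    set p0 := Nat.findGreatest (fun i => v i ≤ (T : ℤ)) (len - 1) with hp0def
    have hp0le : p0 ≤ len - 1 := Nat.findGreatest_le _
    have hp0v : v p0 ≤ (T : ℤ) := by
      rw [hp0def]
      exact Nat.findGreatest_spec (P := fun i => v i ≤ (T : ℤ)) (Nat.zero_le _) hP0
    have hafter : ∀ m, p0 < m → m < len → (T : ℤ) < v m := by
      intro m hm1 hm2
      by_contra hcon
      push_neg at hcon
      exact (Nat.findGreatest_is_greatest hm1 (by omega)) hcon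
    have hzT : T < z := by
      have : T ≤ T + (K + 1) * M := Nat.le_add_right _ _
      omega
    have hlast_gt : (T : ℤ) < v (len - 1) := by rw [hvlast]; exact_mod_cast hzT
    have hp0lt : p0 < len - 1 := by
      rcases Nat.lt_or_ge p0 (len - 1) with h | h
      · exact h
      · exfalso
        have : p0 = len - 1 := by omega
        rw [this] at hp0v
        omega
    -- staircase markers
    set vb : ℕ → ℕ := fun k => T + k * M with hvbdef
    have hvbmono : ∀ {k k' : ℕ}, k ≤ k' → vb k ≤ vb k' := by
      intro k k' h
      simp only [hvbdef]
      exact Nat.add_le_add_left (Nat.mul_le_mul_right _ h) _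
    have hvbsucc : ∀ k, vb (k + 1) = vb k + M := by
      intro k
      simp only [hvbdef, Nat.succ_mul]
      omega
    have hvbz : ∀ k, vb (min k K) < z := by
      intro k
      have h1 : vb (min k K) ≤ vb (K + 1) := hvbmono (by omega)
      have h2 : vb (K + 1) = T + (K + 1) * M := rfl
      omega
    have hex : ∀ k : ℕ, ∃ m, p0 < m ∧ m < len ∧ ((vb (min k K) : ℕ) : ℤ) ≤ v m := by
      intro k
      refine ⟨len - 1, by omega, by omega, ?_⟩
      rw [hvlast]
      exact_mod_cast le_of_lt (hvbz k)
    set J : ℕ → ℕ := fun k => Nat.find (hex k) with hJdef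
    have hJspec : ∀ k, p0 < J k ∧ J k < len ∧ ((vb (min k K) : ℕ) : ℤ) ≤ v (J k) := by
      intro k
      exact Nat.find_spec (hex k)
    have hTvb : ∀ k, 1 ≤ k → (T : ℕ) < vb k := by
      intro k hk
      have : M ≤ k * M := Nat.le_mul_of_pos_left M (by omega)
      simp only [hvbdef]
      omega
    have hJub : ∀ k, 1 ≤ k → k ≤ K → v (J k) < (vb k : ℤ) + M := by
      intro k h1 h2
      have hmin : min k K = k := min_eq_left h2
      obtain ⟨ha, hb, hc⟩ := hJspec k
      have hJpos : 1 ≤ J k := by omega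
      have hmlt := Nat.find_min (hex k) (show J k - 1 < J k by omega)
      rw [hmin] at hc
      have hprev : v (J k - 1) < (vb k : ℤ) := by
        rcases Nat.lt_or_ge p0 (J k - 1) with hp | hp
        · by_contra hcon
          push_neg at hcon
          exact hmlt ⟨hp, by omega, by rw [hmin]; exact hcon⟩
        · have he : J k - 1 = p0 := by omega
          rw [he]
          have := hTvb k h1
          omega
      have hstep' := (hstep (J k - 1) (by omega)).1
      rw [show J k - 1 + 1 = J k from by omega] at hstep'
      omega
    have hJlt : ∀ k k', 1 ≤ k → k < k' → k' ≤ K → J k < J k' ∧ v (J k) < v (J k') := by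
      intro k k' h1 h2 h3
      obtain ⟨ha', hb', hc'⟩ := hJspec k'
      rw [min_eq_left h3] at hc'
      have hub := hJub k h1 (by omega)
      have hvv : v (J k) < v (J k') := by
        have e1 := hvbsucc k
        have e2 : vb (k + 1) ≤ vb k' := hvbmono (by omega)
        omega
      have hle : J k ≤ J k' :=
        Nat.find_min' (hex k) ⟨ha', hb', by
          rw [min_eq_left (by omega : k ≤ K)]
          have : vb k ≤ vb k' := hvbmono (by omega)
          omega⟩
      refine ⟨lt_of_le_of_ne hle ?_, hvv⟩
      intro he
      rw [he] at hvv
      exact lt_irrefl _ hvv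
    -- main claim: a repeated state with increasing counters after p0 yields the goal
    have claim : ∀ (i j : ℕ) (hi : i < len) (hj : j < len), p0 < i → i < j →
        π.get ⟨i, hi⟩ = π.get ⟨j, hj⟩ → v i < v j →
        ∃ c ∈ ConfPlus V γ, Unbounded V c ∧ Reaches V (s, 0) c := by
      intro i j hi hj hpi hij hgeq hvij
      set σ : List Q := (π.drop i).take (j - i + 1) with hσdef
      have hσlen : σ.length = j - i + 1 := by
        rw [hσdef, List.length_take, List.length_drop]
        omega
      have hσget : ∀ m (hm : m < σ.length),
          σ.get ⟨m, hm⟩ = π.get ⟨i + m, by rw [hσlen] at hm; omega⟩ := by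
        intro m hm
        simp only [hσdef, List.get_eq_getElem, List.getElem_take, List.getElem_drop]
      have hσne : σ ≠ [] := by
        intro h
        have := congrArg List.length h
        rw [hσlen] at this
        simp at this
      have hσhead : σ.head? = some (π.get ⟨i, hi⟩) := by
        rw [List.head?_eq_head hσne]
        have h0 : σ.head hσne = σ.get ⟨0, by rw [hσlen]; omega⟩ := by
          rw [List.get_eq_getElem, List.head_eq_getElem]
        rw [h0, hσget 0 (by rw [hσlen]; omega)]
        rfl
      have hσlast : σ.getLast? = some (π.get ⟨j, hj⟩) := by
        rw [List.getLast?_eq_getLast hσne]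
        have h0 : σ.getLast hσne = σ.get ⟨σ.length - 1, by omega⟩ := by
          simp [List.getLast_eq_getElem, List.get_eq_getElem]
        rw [h0, hσget (σ.length - 1) (by omega)]
        have hidx : i + (σ.length - 1) = j := by rw [hσlen]; omega
        exact congrArg some (list_get_congr _ _ hidx)
      have hσpath : IsPath V σ := by
        refine (isPath_iff_chain' V σ).mpr ⟨hσne, ?_⟩
        rw [hσdef]
        exact (((isPath_iff_chain' V π).mp hπv.1.1).2.drop i).take _
      have hσcons : σ = π[i] :: ((π.drop (i + 1)).take (j - i)) := by
        rw [hσdef, List.drop_eq_getElem_cons (by omega : i < π.length)]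
        rfl
      have htk : π.take (j + 1) = π.take i ++ σ := by
        rw [show j + 1 = i + (j - i + 1) from by omega, List.take_add, hσdef]
      have hwσ : pathWeight V σ = v j - v i := by
        have h1 : v j = 0 + pathWeight V (π.take (j + 1)) := rfl
        have h2 : v i = 0 + pathWeight V (π.take (i + 1)) := rfl
        have h3 : π.take (i + 1) = π.take i ++ [π[i]] := by
          rw [List.take_succ, List.getElem?_eq_getElem (by omega : i < π.length)]
          rfl
        rw [htk, hσcons, pathWeight_append V (π.take i) (π[i]) ((π.drop (i + 1)).take (j - i)),
          ← h3, ← hσcons] at h1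
        omega
      have hσpos : 0 < pathWeight V σ := by omega
      have hσcyc : σ.head? = σ.getLast? := by rw [hσhead, hσlast, hgeq]
      obtain ⟨r, hrσ, hrQ⟩ := qplus_of_cycle V σ.length σ le_rfl hσpath (by omega) hσcyc hσpos
      obtain ⟨⟨m, hm⟩, hmr⟩ := List.mem_iff_get.mp hrσ
      have hmlt : i + m < len := by
        rw [hσlen] at hm
        omega
      have hrπ : π.get ⟨i + m, hmlt⟩ = r := by
        rw [← hmr, hσget m hm]
      have hvm : (T : ℤ) < v (i + m) := hafter (i + m) (by omega) hmlt
      have hvnonneg : 0 ≤ v (i + m) := by omega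
      have hreach : Reaches V (s, 0) (π.get ⟨i + m, hmlt⟩, (v (i + m)).toNat) :=
        reaches_get V hπv hπh (i + m) hmlt
      rw [hrπ] at hreach
      have hTp' : (-(pmin V (γ r))).toNat ≤ Tp := by
        rw [hTp]
        exact Finset.le_sup (f := fun q : Q => (-(pmin V (γ q))).toNat) (Finset.mem_univ r)
      have hpm0 : pmin V (γ r) ≤ 0 := pmin_nonpos V _
      refine ⟨(r, (v (i + m)).toNat), ⟨hrQ, ?_⟩, ?_, hreach⟩
      · show (0 : ℤ) ≤ ((v (i + m)).toNat : ℤ) + pmin V (γ r)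
        omega
      · obtain ⟨hsc, hwpos, -⟩ := hγ r hrQ
        exact unbounded_of_cycle V r (γ r) hsc.1 hwpos _ (by omega)
    -- pigeonhole on marker states
    have hpig : ∃ k₁ ∈ Finset.Icc 1 K, ∃ k₂ ∈ Finset.Icc 1 K, k₁ ≠ k₂ ∧
        π.get ⟨J k₁, (hJspec k₁).2.1⟩ = π.get ⟨J k₂, (hJspec k₂).2.1⟩ := by
      apply Finset.exists_ne_map_eq_of_card_lt_of_maps_to (t := (Finset.univ : Finset Q))
      · rw [Nat.card_Icc, Finset.card_univ]
        omega
      · intro k _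
        exact Finset.mem_univ _
    obtain ⟨k₁, hk₁, k₂, hk₂, hkne, hkeq⟩ := hpig
    rw [Finset.mem_Icc] at hk₁ hk₂
    rcases hkne.lt_or_gt with hlt | hlt
    · obtain ⟨hJJ, hvv⟩ := hJlt k₁ k₂ hk₁.1 hlt hk₂.2
      exact claim (J k₁) (J k₂) (hJspec k₁).2.1 (hJspec k₂).2.1 (hJspec k₁).1 hJJ hkeq hvv
    · obtain ⟨hJJ, hvv⟩ := hJlt k₂ k₁ hk₂.1 hlt hk₁.2
      exact claim (J k₂) (J k₁) (hJspec k₂).2.1 (hJspec k₁).2.1 (hJspec k₂).1 hJJ hkeq.symm hvv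
  · rintro ⟨c, hc, hcu, hreach⟩
    exact hcu.mono (fun c' hc' => reaches_trans V hreach hc')


end VASSPaper
end
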